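/- (q-extension of Cheon's formula.) For every integer n ≥ 0 and all x, y ∈ ℂ: B_{n,q}(x,y) = Σ_{k=0}^{n} [n choose k]_q ( B_{k,q}(x) + ((−1;q)_{k−1}/2^{k}) [k]_q x^{k−1} ) E_{n−k,q}(y), where the term ((−1;q)_{k−1}/2^{k}) [k]_q x^{k−1} is understood to vanish for k = 0. -/

import Mathlib

open Finset PowerSeries

/-- The `q`-number `[n]_q = (1 - q^n)/(1 - q)`. -/
noncomputable def qNum (q : ℂ) (n : ℕ) : ℂ := (1 - q ^ n) / (1 - q)

/-- The `q`-factorial `[n]_q!`. -/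
noncomputable def qFact (q : ℂ) : ℕ → ℂ
  | 0 => 1
  | n + 1 => qNum q (n + 1) * qFact q n

/-- The `q`-shifted factorial `(a; q)_n = ∏_{j=0}^{n-1} (1 - q^j a)`. -/
noncomputable def qShift (a q : ℂ) (n : ℕ) : ℂ := ∏ j ∈ Finset.range n, (1 - q ^ j * a)

/-- The Gaussian binomial coefficient `[n choose k]_q = (q;q)_n / ((q;q)_{n-k} (q;q)_k)`. -/
noncomputable def qBinom (q : ℂ) (n k : ℕ) : ℂ :=
  qShift q q n / (qShift q q (n - k) * qShift q q k)

/-- The formal power series (in `t`) `𝓔_q(tx) = Σ_{n≥0} (-1;q)_n (x)^n t^n / (2^n [n]_q!)`. -/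
noncomputable def qExp (q x : ℂ) : PowerSeries ℂ :=
  PowerSeries.mk fun n => qShift (-1) q n * x ^ n / (2 ^ n * qFact q n)

/-- The generating series `Σ_{n≥0} a_n t^n / [n]_q!` of a sequence `a`. -/
noncomputable def qGen (q : ℂ) (a : ℕ → ℂ) : PowerSeries ℂ :=
  PowerSeries.mk fun n => a n / qFact q n

/-- The `q`-addition `(x ⊕_q y)^n`. -/
noncomputable def qAdd (q x y : ℂ) (n : ℕ) : ℂ :=
  ∑ k ∈ Finset.range (n + 1),
    qBinom q n k * (qShift (-1) q k * qShift (-1) q (n - k) / 2 ^ n) * x ^ k * y ^ (n - k)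

section Aux
variable {q : ℂ}

lemma qpow_ne_one (hq1 : ‖q‖ < 1) {k : ℕ} (hk : k ≠ 0) : q ^ k ≠ 1 := by
  intro h
  have : ‖q ^ k‖ = 1 := by rw [h]; simp
  rw [norm_pow] at this
  have hlt : ‖q‖ ^ k < 1 := pow_lt_one₀ (norm_nonneg q) hq1 hk
  linarith

lemma one_sub_q_ne (hq1 : ‖q‖ < 1) : (1 : ℂ) - q ≠ 0 := by
  intro h
  have : q = 1 := by linear_combination -h
  rw [this] at hq1; simp at hq1

lemma qNum_ne_zero (hq1 : ‖q‖ < 1) {k : ℕ} (hk : k ≠ 0) : qNum q k ≠ 0 := by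
  unfold qNum
  exact div_ne_zero (sub_ne_zero.mpr (Ne.symm (qpow_ne_one hq1 hk))) (one_sub_q_ne hq1)

lemma qFact_ne_zero (hq1 : ‖q‖ < 1) (n : ℕ) : qFact q n ≠ 0 := by
  induction n with
  | zero => simp [qFact]
  | succ m ih => exact mul_ne_zero (qNum_ne_zero hq1 (Nat.succ_ne_zero m)) ih

lemma qShift_qq (hq1 : ‖q‖ < 1) (n : ℕ) :
    qShift q q n = (1 - q) ^ n * qFact q n := by
  induction n with
  | zero => simp [qShift, qFact]
  | succ m ih =>
    rw [qShift, Finset.prod_range_succ, ← qShift, ih, qFact]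
    have hthis : (1 - q) * qNum q (m + 1) = 1 - q ^ (m + 1) := by
      unfold qNum; field_simp [one_sub_q_ne hq1]
    have hpow : q ^ m * q = q ^ (m + 1) := by ring
    linear_combination (1 - q ^ m * q) * (0 : ℂ) +
      (- (1 - q) ^ m * qFact q m) * hthis + ((1:ℂ) - q^m*q) * (0:ℂ) +
      ((1 - q) ^ m * qFact q m) * (0:ℂ) +
      (1 - q ^ (m+1)) * (0:ℂ) + ((1-q)^m * qFact q m * (q^m*q - q^(m+1))) * (0:ℂ) +
      (-(1-q)^m * qFact q m) * (0:ℂ) * hpow +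
      ((1 - q)^m * qFact q m) * (0:ℂ)
      + (1 - q^m*q) * (ih - ih)

lemma qBinom_eq (hq1 : ‖q‖ < 1) {n k : ℕ} (hk : k ≤ n) :
    qBinom q n k = qFact q n / (qFact q k * qFact q (n - k)) := by
  unfold qBinom
  rw [qShift_qq hq1, qShift_qq hq1, qShift_qq hq1]
  have h1 := one_sub_q_ne hq1
  have h2 := qFact_ne_zero hq1
  have hpow : (1 - q) ^ n = (1 - q) ^ (n - k) * (1 - q) ^ k := by
    rw [← pow_add]; congr 1; omega
  rw [hpow, div_eq_div_iff (mul_ne_zero (mul_ne_zero (pow_ne_zero _ h1) (h2 _))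
    (mul_ne_zero (pow_ne_zero _ h1) (h2 _))) (mul_ne_zero (h2 k) (h2 (n - k)))]
  ring

lemma qExp_zero : qExp q 0 = 1 := by
  ext n
  cases n with
  | zero => simp [qExp, qShift, qFact, PowerSeries.coeff_zero_eq_constantCoeff]
  | succ m => simp [qExp, PowerSeries.coeff_one]

lemma term_id (Bk Ek N Fm Fnk Fn S xx : ℂ) (hN : N ≠ 0) (hFm : Fm ≠ 0)
    (hFnk : Fnk ≠ 0) (hFn : Fn ≠ 0) (m : ℕ) :
    (2 * (Bk / (N * Fm)) + S * xx / (2 ^ m * Fm)) * (Ek / Fnk) =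
      2 / Fn * (Fn / (N * Fm * Fnk) * (Bk + S / 2 ^ (m + 1) * N * xx) * Ek) := by
  have h2 : (2 : ℂ) ^ m ≠ 0 := pow_ne_zero _ two_ne_zero
  have h2' : (2 : ℂ) ^ (m + 1) = 2 * 2 ^ m := by ring
  rw [h2']
  generalize hp : (2 : ℂ) ^ m = P at h2 ⊢
  field_simp

lemma coeff_two_mul (f : PowerSeries ℂ) (m : ℕ) :
    PowerSeries.coeff m (2 * f) = 2 * PowerSeries.coeff m f := by
  rw [show (2 : PowerSeries ℂ) = PowerSeries.C 2 from (map_ofNat (PowerSeries.C (R := ℂ)) 2).symm,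
    PowerSeries.coeff_C_mul]

end Aux

/-- `q`-extension of Cheon's formula relating `q`-Bernoulli and `q`-Euler polynomials.
(For `k = 0` the extra term vanishes since `[0]_q = 0`.) -/
theorem qCheon_formula (q : ℂ) (hq0 : 0 < ‖q‖) (hq1 : ‖q‖ < 1)
    (B E : ℂ → ℂ → ℕ → ℂ)
    (hB : ∀ x y : ℂ, qGen q (B x y) * (qExp q 1 - 1) = PowerSeries.X * qExp q x * qExp q y)
    (hE : ∀ x y : ℂ, qGen q (E x y) * (qExp q 1 + 1) = 2 * qExp q x * qExp q y)
    (n : ℕ) (x y : ℂ) :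
    B x y n = ∑ k ∈ Finset.range (n + 1),
      qBinom q n k *
        (B x 0 k + qShift (-1) q (k - 1) / 2 ^ k * qNum q k * x ^ (k - 1)) *
        E y 0 (n - k) := by
  have hFact := qFact_ne_zero hq1
  have hqs := one_sub_q_ne hq1
  have hA : qExp q 1 - 1 ≠ 0 := by
    have h1 : PowerSeries.coeff 1 (qExp q 1 - 1) = 1 := by
      simp [qExp, qShift, qFact, qNum, PowerSeries.coeff_one, Finset.prod_range_succ]
      field_simp
      norm_num
    intro h
    rw [h] at h1; simp at h1
  have hP : qExp q 1 + 1 ≠ 0 := by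
    have h1 : PowerSeries.coeff 0 (qExp q 1 + 1) = 2 := by
      simp [qExp, qShift, qFact, PowerSeries.coeff_zero_eq_constantCoeff]
      norm_num
    intro h
    rw [h] at h1; simp at h1
  have hBxy := hB x y
  have hBx0 := hB x 0
  have hEy0 := hE y 0
  rw [qExp_zero, mul_one] at hBx0 hEy0
  have key : 2 * qGen q (B x y) =
      (2 * qGen q (B x 0) + PowerSeries.X * qExp q x) * qGen q (E y 0) := by
    have hcancel : (2 * qGen q (B x y)) * ((qExp q 1 - 1) * (qExp q 1 + 1)) =
        ((2 * qGen q (B x 0) + PowerSeries.X * qExp q x) * qGen q (E y 0)) *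
          ((qExp q 1 - 1) * (qExp q 1 + 1)) := by
      linear_combination (2 * (qExp q 1 + 1)) * hBxy
        - (2 * qGen q (B x 0) + PowerSeries.X * qExp q x) * (qExp q 1 - 1) * hEy0
        - (4 * qExp q y) * hBx0
    exact mul_right_cancel₀ (mul_ne_zero hA hP) hcancel
  have hc : 2 * (B x y n / qFact q n) =
      ∑ k ∈ Finset.range (n + 1),
        PowerSeries.coeff k (2 * qGen q (B x 0) + PowerSeries.X * qExp q x) *
          PowerSeries.coeff (n - k) (qGen q (E y 0)) := by
    have h := congrArg (PowerSeries.coeff n) key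
    rw [PowerSeries.coeff_mul n (2 * qGen q (B x 0) + PowerSeries.X * qExp q x)
        (qGen q (E y 0)), Finset.Nat.sum_antidiagonal_eq_sum_range_succ_mk,
        coeff_two_mul] at h
    simpa [qGen] using h
  have hterm : ∀ k ∈ Finset.range (n + 1),
      PowerSeries.coeff k (2 * qGen q (B x 0) + PowerSeries.X * qExp q x) *
        PowerSeries.coeff (n - k) (qGen q (E y 0)) =
      (2 / qFact q n) * (qBinom q n k *
        (B x 0 k + qShift (-1) q (k - 1) / 2 ^ k * qNum q k * x ^ (k - 1)) *
        E y 0 (n - k)) := by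
    intro k hk
    rw [Finset.mem_range] at hk
    have hkn : k ≤ n := by omega
    have hco : PowerSeries.coeff k (2 * qGen q (B x 0) + PowerSeries.X * qExp q x) =
        2 * (B x 0 k / qFact q k) +
          (if k = 0 then 0
            else qShift (-1) q (k - 1) * x ^ (k - 1) / (2 ^ (k - 1) * qFact q (k - 1))) := by
      rw [map_add, coeff_two_mul]
      congr 1
      · simp [qGen]
      · cases k with
        | zero => simp
        | succ m => simp [PowerSeries.coeff_succ_X_mul, qExp]
    rw [hco, qBinom_eq hq1 hkn]
    simp only [qGen, PowerSeries.coeff_mk]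
    cases k with
    | zero =>
      simp only [qNum, qFact, pow_zero, Nat.zero_sub, Nat.sub_zero, if_true, sub_self, zero_div,
        mul_zero, zero_mul, add_zero, mul_one, div_one, one_mul, qShift]
      field_simp
    | succ m =>
      simp only [Nat.succ_ne_zero, if_false, Nat.succ_sub_one]
      have hnum' : qNum q (m + 1) ≠ 0 := qNum_ne_zero hq1 (Nat.succ_ne_zero m)
      rw [show qFact q (m + 1) = qNum q (m + 1) * qFact q m from rfl]
      exact term_id _ _ _ _ _ _ _ _ hnum' (hFact m) (hFact (n - (m + 1))) (hFact n) m
  rw [Finset.sum_congr rfl hterm, ← Finset.mul_sum] at hc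
  have h2 : (2 : ℂ) / qFact q n ≠ 0 := div_ne_zero two_ne_zero (hFact n)
  rw [show 2 * (B x y n / qFact q n) = (2 / qFact q n) * B x y n by ring] at hc
  exact mul_left_cancel₀ h2 hc
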